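/- Let N ≥ 1 and let M be a real N×N matrix that is diagonalizable over ℂ, with a real eigenvalue λ > 1 that is algebraically simple and strictly dominant (|μ| < λ for every complex eigenvalue μ ≠ λ). Let w ∈ ℝ^N be a right eigenvector (M w = λ w) with all components strictly positive, and let v ∈ ℝ^N be a left eigenvector (Mᵀ v = λ v) normalized so that ⟨v, w⟩ > 0. Then { y ∈ ℝ^N : y_i < 0 for every i and ⟨v, y⟩ < 0 } ⊆ U^{-∞}(M) ⊆ { y ∈ ℝ^N : y_i < 0 for every i and ⟨v, y⟩ ≤ 0 }. -/

import Mathlib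

open Matrix MeasureTheory Filter Set

noncomputable section

/-- `U^{-∞}(M)`: points of the open negative orthant all of whose iterates under `M`
tend to `-∞` in every coordinate. -/
def UnegInf {N : ℕ} (M : Matrix (Fin N) (Fin N) ℝ) : Set (Fin N → ℝ) :=
  {y | (∀ i, y i < 0) ∧ ∀ i, Tendsto (fun k : ℕ => ((M ^ k) *ᵥ y) i) atTop atBot}

/-- `μ ∈ ℂ` is an eigenvalue of the real matrix `M` regarded as a complex matrix. -/
def IsCEigenvalue {N : ℕ} (M : Matrix (Fin N) (Fin N) ℝ) (μ : ℂ) : Prop :=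
  ∃ v : Fin N → ℂ, v ≠ 0 ∧ (M.map Complex.ofReal) *ᵥ v = μ • v

/-- `M` is diagonalizable over `ℂ`: `ℂ^N` has a basis of eigenvectors of `M`. -/
def DiagonalizableOverC {N : ℕ} (M : Matrix (Fin N) (Fin N) ℝ) : Prop :=
  ∃ b : Module.Basis (Fin N) ℂ (Fin N → ℂ), ∀ i, ∃ μ : ℂ,
    (M.map Complex.ofReal) *ᵥ (b i) = μ • (b i)

section Aux
open Polynomial Topology

lemma charpoly_eq_prod {N : ℕ} (Mc : Matrix (Fin N) (Fin N) ℂ)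
    (b : Module.Basis (Fin N) ℂ (Fin N → ℂ)) (μ : Fin N → ℂ)
    (hb : ∀ i, Mc *ᵥ b i = μ i • b i) :
    Mc.charpoly = ∏ i, (X - C (μ i)) := by
  classical
  have hmat : LinearMap.toMatrix b b (Matrix.toLin' Mc) = Matrix.diagonal μ := by
    ext i j
    rw [LinearMap.toMatrix_apply]
    have : Matrix.toLin' Mc (b j) = μ j • b j := by
      rw [Matrix.toLin'_apply, hb]
    rw [this, _root_.map_smul]
    by_cases h : i = j
    · subst h; simp [Matrix.diagonal_apply_eq]
    · simp [Matrix.diagonal_apply_ne _ h, Module.Basis.repr_self,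
        Finsupp.single_apply, Ne.symm h]
  have h1 : Mc.charpoly = (Matrix.diagonal μ).charpoly := by
    conv_lhs => rw [← LinearMap.toMatrix'_toLin' Mc]
    rw [← LinearMap.toMatrix_eq_toMatrix', LinearMap.charpoly_toMatrix, ← hmat,
      LinearMap.charpoly_toMatrix]
  rw [h1, Matrix.charpoly]
  have h2 : (Matrix.diagonal μ).charmatrix = Matrix.diagonal (fun i => X - C (μ i)) := by
    ext i j
    by_cases h : i = j
    · subst h; simp
    · rw [Matrix.charmatrix_apply_ne _ _ _ h, Matrix.diagonal_apply_ne _ h,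
        Matrix.diagonal_apply_ne _ h, map_zero, neg_zero]
  rw [h2, Matrix.det_diagonal]

lemma root_mult_prod {N : ℕ} (μ : Fin N → ℂ) (lam : ℂ)
    (h : Polynomial.rootMultiplicity lam (∏ i, (X - C (μ i))) = 1) :
    ∃ i0 : Fin N, ∀ i, μ i = lam ↔ i = i0 := by
  classical
  have hroots : (∏ i, (X - C (μ i))).roots = Finset.univ.val.map μ := by
    have : (∏ i, (X - C (μ i))) = ((Finset.univ.val.map μ).map (fun a => X - C a)).prod := by
      rw [Multiset.map_map]; rfl
    rw [this, Polynomial.roots_multiset_prod_X_sub_C]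
  have hc : (Finset.univ.filter (fun i => lam = μ i)).card = 1 := by
    rw [← h, ← Polynomial.count_roots, hroots, Multiset.count_map]
    rfl
  obtain ⟨i0, hi0⟩ := Finset.card_eq_one.mp hc
  refine ⟨i0, fun i => ?_⟩
  constructor
  · intro hi
    have : i ∈ Finset.univ.filter (fun i => lam = μ i) := by
      simp [hi.symm]
    rw [hi0, Finset.mem_singleton] at this; exact this
  · intro hii
    subst hii
    have : i ∈ Finset.univ.filter (fun i => lam = μ i) := by
      rw [hi0]; exact Finset.mem_singleton_self _
    simpa [eq_comm] using (Finset.mem_filter.mp this).2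

lemma mulVec_sum' {N : ℕ} {ι : Type*} (A : Matrix (Fin N) (Fin N) ℂ) (s : Finset ι)
    (f : ι → (Fin N → ℂ)) : A *ᵥ (∑ i ∈ s, f i) = ∑ i ∈ s, A *ᵥ f i := by
  exact map_sum A.mulVecLin f s

lemma dot_sum' {N : ℕ} {ι : Type*} (v : Fin N → ℂ) (s : Finset ι)
    (f : ι → (Fin N → ℂ)) : v ⬝ᵥ (∑ i ∈ s, f i) = ∑ i ∈ s, v ⬝ᵥ f i := by
  simp only [dotProduct, Finset.sum_apply, Finset.mul_sum]
  rw [Finset.sum_comm]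

lemma key_tendsto {N : ℕ} (M : Matrix (Fin N) (Fin N) ℝ)
    (b : Module.Basis (Fin N) ℂ (Fin N → ℂ)) (μ : Fin N → ℂ)
    (hbμ : ∀ i, (M.map Complex.ofReal) *ᵥ b i = μ i • b i)
    (lam : ℝ) (hlam : 1 < lam)
    (i0 : Fin N) (hi0 : ∀ i, μ i = (lam : ℂ) ↔ i = i0)
    (hdom : ∀ μ' : ℂ, IsCEigenvalue M μ' → μ' ≠ (lam : ℂ) → ‖μ'‖ < lam)
    (w : Fin N → ℝ) (hw : M *ᵥ w = lam • w) (hwpos : ∀ i, 0 < w i)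
    (v : Fin N → ℝ) (hv : Mᵀ *ᵥ v = lam • v) (hvw : 0 < v ⬝ᵥ w)
    (y : Fin N → ℝ) (j : Fin N) :
    Tendsto (fun k : ℕ => ((M ^ k) *ᵥ y) j / lam ^ k) atTop
      (𝓝 ((v ⬝ᵥ y / v ⬝ᵥ w) * w j)) := by
  classical
  set Mc : Matrix (Fin N) (Fin N) ℂ := M.map Complex.ofReal with hMcdef
  have hlam0 : (0 : ℝ) < lam := lt_trans one_pos hlam
  have hlamC : (lam : ℂ) ≠ 0 := by exact_mod_cast hlam0.ne'
  -- dominance for indices ≠ i0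
  have hdom' : ∀ i, i ≠ i0 → ‖μ i‖ < lam := fun i hi =>
    hdom (μ i) ⟨b i, b.ne_zero i, hbμ i⟩ (fun h => hi ((hi0 i).1 h))
  have hμi0 : μ i0 = (lam : ℂ) := (hi0 i0).2 rfl
  -- complexifications
  set wc : Fin N → ℂ := fun i => (w i : ℂ) with hwcdef
  set vc : Fin N → ℂ := fun i => (v i : ℂ) with hvcdef
  set yc : Fin N → ℂ := fun i => (y i : ℂ) with hycdef
  have hwc : Mc *ᵥ wc = (lam : ℂ) • wc := by
    funext i
    have h1 := RingHom.map_mulVec Complex.ofRealHom M w i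
    rw [hw] at h1
    rw [show (⇑Complex.ofRealHom : ℝ → ℂ) = Complex.ofReal from rfl] at h1
    simpa [Mc, wc, Function.comp_def] using h1.symm
  have hvc : Mcᵀ *ᵥ vc = (lam : ℂ) • vc := by
    funext i
    have h1 := RingHom.map_mulVec Complex.ofRealHom Mᵀ v i
    rw [hv] at h1
    have h2 : (Mᵀ).map (Complex.ofRealHom : ℝ →+* ℂ) = Mcᵀ := by
      rw [Matrix.transpose_map]; rfl
    rw [h2] at h1
    rw [show (⇑Complex.ofRealHom : ℝ → ℂ) = Complex.ofReal from rfl] at h1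
    simpa [vc, Function.comp_def] using h1.symm
  -- left eigenvector kills non-dominant basis vectors
  have hvb : ∀ i, i ≠ i0 → vc ⬝ᵥ b i = 0 := by
    intro i hi
    have h1 : vc ⬝ᵥ (Mc *ᵥ b i) = (lam : ℂ) * (vc ⬝ᵥ b i) := by
      rw [Matrix.dotProduct_mulVec, ← Matrix.mulVec_transpose, hvc]
      simp [smul_dotProduct, smul_eq_mul]
    rw [hbμ i] at h1
    have h2 : μ i * (vc ⬝ᵥ b i) = (lam : ℂ) * (vc ⬝ᵥ b i) := by
      simpa [dotProduct_smul, smul_eq_mul] using h1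
    have hμne : μ i ≠ (lam : ℂ) := fun h => hi ((hi0 i).1 h)
    by_contra hne
    exact hμne (mul_right_cancel₀ hne h2)
  -- repr of mulVec
  have hmulrepr : ∀ (x : Fin N → ℂ) (i : Fin N),
      b.repr (Mc *ᵥ x) i = μ i * b.repr x i := by
    intro x i
    conv_lhs => rw [← b.sum_repr x]
    have : Mc *ᵥ (∑ i, b.repr x i • b i) = ∑ i, (μ i * b.repr x i) • b i := by
      rw [mulVec_sum']
      refine Finset.sum_congr rfl fun i _ => ?_
      rw [Matrix.mulVec_smul, hbμ i, smul_smul, mul_comm]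
    rw [this, Module.Basis.repr_sum_self]
  -- coefficients of w
  set d : Fin N → ℂ := fun i => b.repr wc i with hddef
  have hd : ∀ i, i ≠ i0 → d i = 0 := by
    intro i hi
    have h1 : μ i * d i = (lam : ℂ) * d i := by
      have h2 := hmulrepr wc i
      rw [hwc, _root_.map_smul] at h2
      simpa [d, smul_eq_mul] using h2.symm
    have hμne : μ i ≠ (lam : ℂ) := fun h => hi ((hi0 i).1 h)
    by_contra hne
    exact hμne (mul_right_cancel₀ hne h1)
  have hwc_eq : wc = d i0 • b i0 := by
    conv_lhs => rw [← b.sum_repr wc]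
    rw [Finset.sum_eq_single i0]
    · intro i _ hi; rw [show (b.repr wc) i = d i from rfl, hd i hi, zero_smul]
    · intro h; exact absurd (Finset.mem_univ i0) h
  have hdi0 : d i0 ≠ 0 := by
    intro h
    have : wc j = 0 := by rw [hwc_eq, h, zero_smul]; rfl
    have : (w j : ℂ) = 0 := this
    exact_mod_cast (hwpos j).ne' (by exact_mod_cast this)
  -- dot products
  have hvwC : vc ⬝ᵥ wc = ((v ⬝ᵥ w : ℝ) : ℂ) := by
    simp [vc, wc, dotProduct]
  have hvyC : vc ⬝ᵥ yc = ((v ⬝ᵥ y : ℝ) : ℂ) := by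
    simp [vc, yc, dotProduct]
  have hvwC0 : vc ⬝ᵥ wc ≠ 0 := by
    rw [hvwC]; exact_mod_cast hvw.ne'
  have hvwb : vc ⬝ᵥ wc = d i0 * (vc ⬝ᵥ b i0) := by
    rw [hwc_eq]; simp [dotProduct_smul, smul_eq_mul]
  have hvb0 : vc ⬝ᵥ b i0 ≠ 0 := by
    intro h; rw [hvwb, h, mul_zero] at hvwC0; exact hvwC0 rfl
  -- coefficients of y
  set c : Fin N → ℂ := fun i => b.repr yc i with hcdef
  have hyc_eq : yc = ∑ i, c i • b i := (b.sum_repr yc).symm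
  have hvyc : vc ⬝ᵥ yc = c i0 * (vc ⬝ᵥ b i0) := by
    conv_lhs => rw [hyc_eq]
    rw [dot_sum']
    rw [Finset.sum_eq_single i0]
    · simp [dotProduct_smul, smul_eq_mul]
    · intro i _ hi; simp [dotProduct_smul, smul_eq_mul, hvb i hi]
    · intro h; exact absurd (Finset.mem_univ i0) h
  -- iterates
  have hpow : ∀ (k : ℕ) (i : Fin N), (Mc ^ k) *ᵥ b i = (μ i) ^ k • b i := by
    intro k i
    induction k with
    | zero => simp
    | succ k ih =>
      rw [pow_succ, ← Matrix.mulVec_mulVec, hbμ i, Matrix.mulVec_smul, ih,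
        smul_smul, pow_succ, mul_comm]
  have hiter : ∀ k : ℕ, (Mc ^ k) *ᵥ yc = ∑ i, (c i * (μ i) ^ k) • b i := by
    intro k
    conv_lhs => rw [hyc_eq]
    rw [mulVec_sum']
    refine Finset.sum_congr rfl fun i _ => ?_
    rw [Matrix.mulVec_smul, hpow, smul_smul]
  -- coordinates of iterates
  have hcoord : ∀ (k : ℕ), (((M ^ k) *ᵥ y) j : ℂ) = ∑ i, c i * (μ i) ^ k * b i j := by
    intro k
    have h1 := RingHom.map_mulVec Complex.ofRealHom (M ^ k) y j
    have h2 : (M ^ k).map (Complex.ofRealHom : ℝ →+* ℂ) = Mc ^ k := by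
      rw [← RingHom.mapMatrix_apply, map_pow, RingHom.mapMatrix_apply]; rfl
    rw [h2] at h1
    have h3 : (Complex.ofRealHom : ℝ →+* ℂ) ∘ y = yc := rfl
    rw [h3] at h1
    rw [show (((M ^ k) *ᵥ y) j : ℂ) = Complex.ofRealHom (((M ^ k) *ᵥ y) j) from rfl, h1,
      hiter k]
    simp [Finset.sum_apply, Pi.smul_apply, smul_eq_mul, mul_assoc]
  -- complex convergence
  have hctend : Tendsto (fun k : ℕ => (((M ^ k) *ᵥ y) j : ℂ) / (lam : ℂ) ^ k) atTop
      (𝓝 (c i0 * b i0 j)) := by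
    have heq : ∀ k : ℕ, (((M ^ k) *ᵥ y) j : ℂ) / (lam : ℂ) ^ k
        = ∑ i, c i * (μ i / (lam : ℂ)) ^ k * b i j := by
      intro k
      rw [hcoord k, Finset.sum_div]
      refine Finset.sum_congr rfl fun i _ => ?_
      rw [div_pow]; ring
    simp only [heq]
    have hterm : ∀ i : Fin N, Tendsto (fun k : ℕ => c i * (μ i / (lam : ℂ)) ^ k * b i j)
        atTop (𝓝 (if i = i0 then c i0 * b i0 j else 0)) := by
      intro i
      by_cases hi : i = i0
      · subst hi
        have : ∀ k : ℕ, c i * (μ i / (lam : ℂ)) ^ k * b i j = c i * b i j := by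
          intro k; rw [hμi0, div_self hlamC, one_pow, mul_one]
        simp only [this, if_pos rfl]
        exact tendsto_const_nhds
      · rw [if_neg hi]
        have hnorm : ‖μ i / (lam : ℂ)‖ < 1 := by
          rw [norm_div]
          rw [div_lt_one (by simpa using hlam0.ne' : (0:ℝ) < ‖(lam : ℂ)‖)]
          simpa [abs_of_pos hlam0] using hdom' i hi
        have h0 := tendsto_pow_atTop_nhds_zero_of_norm_lt_one hnorm
        have := (h0.const_mul (c i)).mul_const (b i j)
        simpa using this
    have hsum := tendsto_finset_sum Finset.univ (fun i _ => hterm i)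
    simpa [Finset.sum_ite_eq' Finset.univ i0] using hsum
  -- identify the limit
  have hlimit : c i0 * b i0 j = (((v ⬝ᵥ y / v ⬝ᵥ w) * w j : ℝ) : ℂ) := by
    have hwj : (w j : ℂ) = d i0 * b i0 j := by
      have := congrFun hwc_eq j
      simpa [Pi.smul_apply, smul_eq_mul] using this
    have hci0 : c i0 = ((v ⬝ᵥ y : ℝ) : ℂ) / (vc ⬝ᵥ b i0) := by
      rw [← hvyC, hvyc]; field_simp
    have hdval : vc ⬝ᵥ b i0 = ((v ⬝ᵥ w : ℝ) : ℂ) / d i0 := by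
      rw [← hvwC, hvwb]; field_simp
    rw [hci0, hdval]
    push_cast
    rw [hwj]
    have hvwC' : ((v ⬝ᵥ w : ℝ) : ℂ) ≠ 0 := by exact_mod_cast hvw.ne'
    field_simp
  -- conclude real convergence via re
  rw [hlimit] at hctend
  have hre := (Complex.continuous_re.tendsto _).comp hctend
  have heqre : (fun k : ℕ => ((((M ^ k) *ᵥ y) j : ℂ) / (lam : ℂ) ^ k).re)
      = fun k : ℕ => ((M ^ k) *ᵥ y) j / lam ^ k := by
    funext k
    rw [show ((lam : ℂ) ^ k) = ((lam ^ k : ℝ) : ℂ) by push_cast; ring,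
      ← Complex.ofReal_div, Complex.ofReal_re]
  rw [show ((((v ⬝ᵥ y / v ⬝ᵥ w) * w j : ℝ) : ℂ)).re = (v ⬝ᵥ y / v ⬝ᵥ w) * w j from
    Complex.ofReal_re _] at hre
  simpa only [Function.comp_def, heqre] using hre

end Aux

/-- Characterization of `U^{-∞}(M)` up to a boundary set: with a simple strictly
dominant real eigenvalue `λ > 1`, a positive right eigenvector `w` and a left
eigenvector `v` with `⟨v, w⟩ > 0`, the set `U^{-∞}(M)` is squeezed between
`{y ∈ ℝ^N₋ : ⟨v, y⟩ < 0}` and `{y ∈ ℝ^N₋ : ⟨v, y⟩ ≤ 0}`. -/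
theorem stmt14 {N : ℕ} (hN : 1 ≤ N) (M : Matrix (Fin N) (Fin N) ℝ)
    (hdiag : DiagonalizableOverC M)
    (lam : ℝ) (hlam : 1 < lam)
    (hsimple : Polynomial.rootMultiplicity (lam : ℂ) (M.map Complex.ofReal).charpoly = 1)
    (hdom : ∀ μ : ℂ, IsCEigenvalue M μ → μ ≠ (lam : ℂ) → ‖μ‖ < lam)
    (w : Fin N → ℝ) (hw : M *ᵥ w = lam • w) (hwpos : ∀ i, 0 < w i)
    (v : Fin N → ℝ) (hv : Mᵀ *ᵥ v = lam • v) (hvw : 0 < v ⬝ᵥ w) :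
    {y : Fin N → ℝ | (∀ i, y i < 0) ∧ v ⬝ᵥ y < 0} ⊆ UnegInf M ∧
    UnegInf M ⊆ {y : Fin N → ℝ | (∀ i, y i < 0) ∧ v ⬝ᵥ y ≤ 0} := by
  classical
  obtain ⟨b, hb⟩ := hdiag
  choose μ hbμ using hb
  have hchar : (M.map Complex.ofReal).charpoly
      = ∏ i, (Polynomial.X - Polynomial.C (μ i)) := charpoly_eq_prod _ b μ hbμ
  rw [hchar] at hsimple
  obtain ⟨i0, hi0⟩ := root_mult_prod μ (lam : ℂ) hsimple
  have key := fun (y : Fin N → ℝ) (j : Fin N) =>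
    key_tendsto M b μ hbμ lam hlam i0 hi0 hdom w hw hwpos v hv hvw y j
  have hlamT : Tendsto (fun k : ℕ => lam ^ k) atTop atTop :=
    tendsto_pow_atTop_atTop_of_one_lt hlam
  have heq : ∀ (y : Fin N → ℝ) (i : Fin N),
      (fun k : ℕ => lam ^ k * (((M ^ k) *ᵥ y) i / lam ^ k))
        = fun k : ℕ => ((M ^ k) *ᵥ y) i := by
    intro y i; funext k
    have hk : (lam : ℝ) ^ k ≠ 0 := (pow_pos (lt_trans one_pos hlam) k).ne'
    field_simp
  constructor
  · rintro y ⟨hyneg, hvy⟩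
    refine ⟨hyneg, fun i => ?_⟩
    have ha : v ⬝ᵥ y / v ⬝ᵥ w * w i < 0 :=
      mul_neg_of_neg_of_pos (div_neg_of_neg_of_pos hvy hvw) (hwpos i)
    have h2 := hlamT.atTop_mul_neg ha (key y i)
    rw [heq y i] at h2
    exact h2
  · rintro y ⟨hyneg, htend⟩
    refine ⟨hyneg, ?_⟩
    by_contra hpos
    push_neg at hpos
    set i : Fin N := ⟨0, hN⟩ with hidef
    have ha : 0 < v ⬝ᵥ y / v ⬝ᵥ w * w i := mul_pos (div_pos hpos hvw) (hwpos i)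
    have h2 := hlamT.atTop_mul_pos ha (key y i)
    rw [heq y i] at h2
    obtain ⟨k, hk1, hk2⟩ := ((h2.eventually (eventually_ge_atTop (1 : ℝ))).and
      ((htend i).eventually (eventually_le_atBot (0 : ℝ)))).exists
    linarith
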